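/- Let A be a symmetric n×n real matrix with orthonormal eigenbasis φ_1,…,φ_n and eigenvalues λ_1 ≤ … ≤ λ_n with λ_ℓ < λ_{ℓ+1}. Let θ > 0, τ = (λ_{ℓ+1}+λ_n)/2 − 1/θ − 1, G = (1+θ(1+τ))I − θA, and ρ = (λ_n−λ_{ℓ+1})/(λ_n+λ_{ℓ+1}−2λ_ℓ). If x = Σ_j α_j φ_j with α_ℓ ≠ 0, then for each j ≥ ℓ+1, |⟨Gx, φ_j⟩| / |⟨Gx, φ_ℓ⟩| ≤ ρ · |α_j|/|α_ℓ|; i.e., one Richardson step contracts the relative size of each undesired coefficient (relative to the ℓ-th desired coefficient) by at least the factor ρ < 1. -/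

import Mathlib

open Matrix Finset

lemma sum_dotProduct' {m : Type*} [Fintype m] {ι : Type*} (s : Finset ι)
    (f : ι → m → ℝ) (w : m → ℝ) : (∑ i ∈ s, f i) ⬝ᵥ w = ∑ i ∈ s, f i ⬝ᵥ w := by
  simp only [dotProduct, Finset.sum_apply, Finset.sum_mul]
  exact Finset.sum_comm

theorem richardson_step_contracts_relative_coefficients
    (n : ℕ) (A : Matrix (Fin (n + 1)) (Fin (n + 1)) ℝ) (hA : A.IsSymm)
    (φ : Fin (n + 1) → (Fin (n + 1) → ℝ)) (lam : Fin (n + 1) → ℝ)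
    (hortho : ∀ i j, φ i ⬝ᵥ φ j = if i = j then (1 : ℝ) else 0)
    (heig : ∀ j, A.mulVec (φ j) = lam j • φ j)
    (hmono : Monotone lam)
    (ℓ : Fin (n + 1)) (hℓ : (ℓ : ℕ) + 1 ≤ n)
    (hgap : lam ℓ < lam ⟨(ℓ : ℕ) + 1, by omega⟩)
    (θ τ : ℝ) (hθ : 0 < θ)
    (hτ : τ = (lam ⟨(ℓ : ℕ) + 1, by omega⟩ + lam (Fin.last n)) / 2 - 1 / θ - 1)
    (G : Matrix (Fin (n + 1)) (Fin (n + 1)) ℝ)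
    (hG : G = (1 + θ * (1 + τ)) • (1 : Matrix (Fin (n + 1)) (Fin (n + 1)) ℝ) - θ • A)
    (ρ : ℝ)
    (hρ : ρ = (lam (Fin.last n) - lam ⟨(ℓ : ℕ) + 1, by omega⟩) /
        (lam (Fin.last n) + lam ⟨(ℓ : ℕ) + 1, by omega⟩ - 2 * lam ℓ))
    (α : Fin (n + 1) → ℝ) (x : Fin (n + 1) → ℝ)
    (hx : x = ∑ j, α j • φ j) (hα : α ℓ ≠ 0)
    (j : Fin (n + 1)) (hj : (ℓ : ℕ) + 1 ≤ (j : ℕ)) :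
    |G.mulVec x ⬝ᵥ φ j| / |G.mulVec x ⬝ᵥ φ ℓ| ≤ ρ * (|α j| / |α ℓ|) := by

  set L1 := lam ⟨(ℓ : ℕ) + 1, by omega⟩ with hL1
  set Ln := lam (Fin.last n) with hLn
  set L0 := lam ℓ with hL0
  -- eigenvector action of G
  have hGφ : ∀ k, G.mulVec (φ k) = (1 + θ * (1 + τ) - θ * lam k) • φ k := by
    intro k
    rw [hG, Matrix.sub_mulVec, Matrix.smul_mulVec, Matrix.smul_mulVec,
      Matrix.one_mulVec, heig]
    ext i
    simp [Pi.smul_apply, smul_eq_mul]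
    ring
  have key : ∀ k, G.mulVec x ⬝ᵥ φ k = (1 + θ * (1 + τ) - θ * lam k) * α k := by
    intro k
    rw [hx]
    have : G.mulVec (∑ i, α i • φ i) = ∑ i, α i • ((1 + θ * (1 + τ) - θ * lam i) • φ i) := by
      rw [show G.mulVec (∑ i, α i • φ i) = G.mulVecLin (∑ i, α i • φ i) from rfl,
        map_sum]
      refine Finset.sum_congr rfl fun i _ => ?_
      rw [_root_.map_smul, Matrix.mulVecLin_apply, hGφ]
    rw [this, sum_dotProduct']
    have : ∀ i ∈ Finset.univ, (α i • ((1 + θ * (1 + τ) - θ * lam i) • φ i)) ⬝ᵥ φ k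
        = (if i = k then (1 + θ * (1 + τ) - θ * lam i) * α i else 0) := by
      intro i _
      rw [smul_dotProduct, smul_dotProduct, hortho]
      by_cases h : i = k <;> simp [h, smul_eq_mul] <;> ring
    rw [Finset.sum_congr rfl this, Finset.sum_ite_eq' Finset.univ k]
    simp
  -- ordering facts
  have hj1 : L1 ≤ lam j := hmono (by simpa [Fin.le_def] using hj)
  have hjn : lam j ≤ Ln := hmono (Fin.le_last j)
  have h1n : L1 ≤ Ln := le_trans hj1 hjn
  have hden : 0 < Ln + L1 - 2 * L0 := by linarith
  set μℓ : ℝ := 1 + θ * (1 + τ) - θ * L0 with hμℓ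
  set μj : ℝ := 1 + θ * (1 + τ) - θ * lam j with hμj
  have hμℓval : μℓ = θ * (Ln + L1 - 2 * L0) / 2 := by rw [hμℓ, hτ]; field_simp; ring
  have hμℓpos : 0 < μℓ := by
    rw [hμℓval]; positivity
  have habs : |μj| ≤ ρ * μℓ := by
    have hrμ : ρ * μℓ = θ * (Ln - L1) / 2 := by
      rw [hρ, hμℓval]; field_simp
    rw [hrμ]
    rw [abs_le]
    constructor
    · rw [hμj, hτ]; nlinarith
    · rw [hμj, hτ]; nlinarith
  have hrat : |μj| / |μℓ| ≤ ρ := by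
    rw [abs_of_pos hμℓpos, div_le_iff₀ hμℓpos]
    exact habs
  rw [key j, key ℓ, abs_mul, abs_mul, ← div_mul_div_comm]
  have : |μj| / |μℓ| * (|α j| / |α ℓ|) ≤ ρ * (|α j| / |α ℓ|) :=
    mul_le_mul_of_nonneg_right hrat (by positivity)
  exact this
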